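/- The cubic equation ς³ + (1 - k·q)·ς² - σ = 0 with σ > 0 and 0 < k < 1/3 has a negative real root if and only if q ≤ (1/k)·(1 - 3·(σ/4)^(1/3)). -/
import Mathlib


theorem stmt_1 (k q σ : ℝ) (hk : 0 < k) (hk' : k < 1/3) (hσ : 0 < σ) :
    (∃ ς : ℝ, ς < 0 ∧ ς^3 + (1 - k*q)*ς^2 - σ = 0) ↔
      q ≤ (1/k) * (1 - 3 * (σ/4) ^ ((1:ℝ)/3)) := by
  set c := (σ/4) ^ ((1:ℝ)/3) with hc
  have hσ4 : (0:ℝ) < σ/4 := by linarith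
  have hc0 : 0 < c := Real.rpow_pos_of_pos hσ4 _
  have hc3 : c^3 = σ/4 := by
    rw [hc, ← Real.rpow_natCast ((σ/4) ^ ((1:ℝ)/3)) 3,
      ← Real.rpow_mul hσ4.le]
    norm_num
  constructor
  · rintro ⟨ς, hς, hroot⟩
    set a := 1 - k*q with ha
    set t := -ς with ht
    have ht0 : 0 < t := by simp [ht]; linarith
    have hσt : t^2*(a - t) = σ := by
      have : ς = -t := by simp [ht]
      rw [this] at hroot; nlinarith [hroot]
    have ha0 : 0 < a := by nlinarith [sq_nonneg t]
    have h27 : 27*σ ≤ 4*a^3 := by nlinarith [sq_nonneg (3*t - 2*a)]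
    have hca : 3*c ≤ a := by
      have h1 : (3*c)^3 ≤ a^3 := by nlinarith
      exact le_of_pow_le_pow_left₀ (by norm_num) ha0.le h1
    have hq : q * k ≤ 1 - 3*c := by nlinarith
    have heq : (1/k) * (1 - 3*c) = (1 - 3*c)/k := by ring
    rw [heq, le_div_iff₀ hk]
    linarith
  · intro hq
    set a := 1 - k*q with ha
    have hca : 3*c ≤ a := by
      have h := mul_le_mul_of_nonneg_left hq hk.le
      have h2 : k * ((1/k) * (1 - 3*c)) = 1 - 3*c := by field_simp
      rw [h2] at h
      simp [ha]; linarith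
    have ha0 : 0 < a := by linarith
    clear_value a c
    have hcube : (3*c)^3 ≤ a^3 := pow_le_pow_left₀ (by positivity) hca 3
    have hcube' : 27 * c^3 ≤ a^3 := by linarith [hcube, (by ring : (3*c)^3 = 27*c^3)]
    have hfa : 4*a^3/27 - σ ≥ 0 := by nlinarith [hcube', hc3]
    have hcont : ContinuousOn (fun x : ℝ => x^3 + a*x^2 - σ) (Set.Icc (-(2*a/3)) 0) := by
      fun_prop
    have hle : -(2*a/3) ≤ (0:ℝ) := by linarith
    have hmem : (0:ℝ) ∈ Set.Icc ((fun x : ℝ => x^3 + a*x^2 - σ) 0)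
        ((fun x : ℝ => x^3 + a*x^2 - σ) (-(2*a/3))) := by
      constructor
      · simp; linarith
      · show (0:ℝ) ≤ (-(2*a/3))^3 + a*(-(2*a/3))^2 - σ
        nlinarith
    obtain ⟨ς, hςmem, hval⟩ := intermediate_value_Icc' hle hcont hmem
    refine ⟨ς, ?_, hval⟩
    rcases lt_or_eq_of_le hςmem.2 with h | h
    · exact h
    · exfalso
      rw [h] at hval
      simp at hval
      linarith
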